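/- Let G be a countable discrete group and f an n×n matrix over ℤ[G] admitting an ℓ² formal inverse ξ with real-valued entries. Then for every α ∈ ℤ[G]^{⊕n}: if α ∈ r(f)(ℤ[G]^{⊕n}), then for every m the infinite product ∏_{l=1}^n ∏_{g∈G} D_m((r(ξ)α)(l)(g)) equals 1; and if α ∉ r(f)(ℤ[G]^{⊕n}), then lim_{m→∞} ∏_{l=1}^n ∏_{g∈G} D_m((r(ξ)α)(l)(g)) = 0. -/

import Mathlib

open scoped Classical ENNReal

noncomputable section

/-- Convolution of a finitely supported `a : ℝ[G]` with `ξ : G → ℝ`: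
`(a*ξ)(g) = ∑_{h} a(h) ξ(h⁻¹g)`. -/
def fconvReal {G : Type*} [Group G] (a : G →₀ ℝ) (ξ : G → ℝ) : G → ℝ :=
  fun g => a.sum fun h c => c * ξ (h⁻¹ * g)

/-- Convolution of `ξ : G → ℝ` with a finitely supported `a : ℝ[G]`. -/
def fconvRealR {G : Type*} [Group G] (ξ : G → ℝ) (a : G →₀ ℝ) : G → ℝ :=
  fun g => a.sum fun h c => ξ (g * h⁻¹) * c

/-- The matrix `1̂` with diagonal entries `δ_e` and zero off-diagonal entries. -/
def oneHatReal (G : Type*) [Group G] (n : ℕ) : Matrix (Fin n) (Fin n) (G → ℝ) :=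
  fun i j g => if i = j ∧ g = 1 then 1 else 0

/-- `(fξ)_{ij} = ∑_k f_{ik} * ξ_{kj}`. -/
def matConvReal {G : Type*} [Group G] {n : ℕ} (f : Matrix (Fin n) (Fin n) (G →₀ ℝ))
    (ξ : Matrix (Fin n) (Fin n) (G → ℝ)) : Matrix (Fin n) (Fin n) (G → ℝ) :=
  fun i j => ∑ k, fconvReal (f i k) (ξ k j)

/-- `(ξf)_{ij} = ∑_k ξ_{ik} * f_{kj}`. -/
def matConvRealR {G : Type*} [Group G] {n : ℕ} (ξ : Matrix (Fin n) (Fin n) (G → ℝ))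
    (f : Matrix (Fin n) (Fin n) (G →₀ ℝ)) : Matrix (Fin n) (Fin n) (G → ℝ) :=
  fun i j => ∑ k, fconvRealR (ξ i k) (f k j)

/-- A finitely supported integer-valued function regarded as an element of `ℝ[G]`. -/
def castZR {G : Type*} [Group G] (a : MonoidAlgebra ℤ G) : G →₀ ℝ :=
  Finsupp.mapRange (Int.cast : ℤ → ℝ) Int.cast_zero a.coeff

/-- The normalized Dirichlet kernel `D_m(t) = (2m+1)⁻¹ ∑_{j=-m}^{m} cos(2πjt)`. -/
def Dm (m : ℕ) (t : ℝ) : ℝ :=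
  (2 * (m : ℝ) + 1)⁻¹ * ∑ j ∈ Finset.Icc (-(m : ℤ)) (m : ℤ), Real.cos (2 * Real.pi * (j : ℝ) * t)

namespace DirichletAux

open Finset Real Filter

/-! ### Dirichlet kernel facts -/

lemma card_Icc_int (m : ℕ) : (Finset.Icc (-(m : ℤ)) (m : ℤ)).card = 2 * m + 1 := by
  rw [Int.card_Icc]; omega

lemma twoMone_pos (m : ℕ) : (0:ℝ) < 2 * (m:ℝ) + 1 := by positivity

lemma Dm_int (m : ℕ) (z : ℤ) : Dm m ((z : ℤ) : ℝ) = 1 := by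
  unfold Dm
  have h : ∀ j ∈ Finset.Icc (-(m : ℤ)) (m : ℤ),
      Real.cos (2 * Real.pi * (j : ℝ) * ((z : ℤ) : ℝ)) = 1 := by
    intro j _
    have e : (2 * Real.pi * (j : ℝ) * ((z : ℤ) : ℝ)) = ((j * z : ℤ) : ℝ) * (2 * Real.pi) := by
      push_cast; ring
    rw [e, Real.cos_int_mul_two_pi]
  rw [Finset.sum_congr rfl h, Finset.sum_const, card_Icc_int, nsmul_eq_mul]
  have : ((2 * m + 1 : ℕ) : ℝ) = 2 * (m : ℝ) + 1 := by push_cast; ring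
  rw [this, mul_one, inv_mul_cancel₀ (twoMone_pos m).ne']

lemma abs_sum_cos_le (m : ℕ) (t : ℝ) :
    |∑ j ∈ Finset.Icc (-(m : ℤ)) (m : ℤ), Real.cos (2 * Real.pi * (j : ℝ) * t)|
      ≤ 2 * (m : ℝ) + 1 := by
  calc |∑ j ∈ Finset.Icc (-(m : ℤ)) (m : ℤ), Real.cos (2 * Real.pi * (j : ℝ) * t)|
      ≤ ∑ j ∈ Finset.Icc (-(m : ℤ)) (m : ℤ), |Real.cos (2 * Real.pi * (j : ℝ) * t)| :=
        Finset.abs_sum_le_sum_abs _ _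
    _ ≤ ∑ _j ∈ Finset.Icc (-(m : ℤ)) (m : ℤ), 1 :=
        Finset.sum_le_sum fun j _ => Real.abs_cos_le_one _
    _ = 2 * (m : ℝ) + 1 := by
        rw [Finset.sum_const, card_Icc_int, nsmul_eq_mul, mul_one]; push_cast; ring

lemma abs_Dm_le_one (m : ℕ) (t : ℝ) : |Dm m t| ≤ 1 := by
  unfold Dm
  rw [abs_mul, abs_inv, abs_of_pos (twoMone_pos m)]
  rw [inv_mul_le_iff₀ (twoMone_pos m), mul_one]
  exact abs_sum_cos_le m t

lemma one_sub_cos_le_half_sq (y : ℝ) : 1 - Real.cos y ≤ y ^ 2 / 2 := by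
  have h1 : Real.cos y = 2 * Real.cos (y / 2) ^ 2 - 1 := by
    have := Real.cos_two_mul (y / 2)
    rw [show 2 * (y / 2) = y by ring] at this
    exact this
  have h2 : Real.cos (y / 2) ^ 2 = 1 - Real.sin (y / 2) ^ 2 := Real.cos_sq' _
  have h3 : |Real.sin (y / 2)| ≤ |y / 2| := Real.abs_sin_le_abs
  have h4 : Real.sin (y / 2) ^ 2 ≤ (y / 2) ^ 2 := by
    rw [← sq_abs, ← sq_abs (y / 2)]
    exact pow_le_pow_left₀ (abs_nonneg _) h3 2
  nlinarith

lemma abs_Dm_sub_one_le (m : ℕ) (t : ℝ) :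
    |Dm m t - 1| ≤ (2 * Real.pi * (m : ℝ)) ^ 2 / 2 * t ^ 2 := by
  have hcard : ((2 * m + 1 : ℕ) : ℝ) = 2 * (m : ℝ) + 1 := by push_cast; ring
  have hone : (2 * (m : ℝ) + 1)⁻¹ *
      ∑ _j ∈ Finset.Icc (-(m : ℤ)) (m : ℤ), (1 : ℝ) = 1 := by
    rw [Finset.sum_const, card_Icc_int, nsmul_eq_mul, mul_one, hcard,
      inv_mul_cancel₀ (twoMone_pos m).ne']
  have key : Dm m t - 1 = (2 * (m : ℝ) + 1)⁻¹ *
      ∑ j ∈ Finset.Icc (-(m : ℤ)) (m : ℤ), (Real.cos (2 * Real.pi * (j : ℝ) * t) - 1) := by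
    rw [Finset.sum_sub_distrib, mul_sub, hone, Dm]
  rw [key, abs_mul, abs_inv, abs_of_pos (twoMone_pos m)]
  have hterm : ∀ j ∈ Finset.Icc (-(m : ℤ)) (m : ℤ),
      |Real.cos (2 * Real.pi * (j : ℝ) * t) - 1| ≤ (2 * Real.pi * (m : ℝ)) ^ 2 / 2 * t ^ 2 := by
    intro j hj
    rw [Finset.mem_Icc] at hj
    have hjabs : |(j : ℝ)| ≤ (m : ℝ) := by
      rw [← Int.cast_abs]
      exact_mod_cast (abs_le.mpr hj)
    have h1 : |Real.cos (2 * Real.pi * (j : ℝ) * t) - 1|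
        = 1 - Real.cos (2 * Real.pi * (j : ℝ) * t) := by
      rw [abs_sub_comm, abs_of_nonneg]
      linarith [Real.cos_le_one (2 * Real.pi * (j : ℝ) * t)]
    rw [h1]
    calc 1 - Real.cos (2 * Real.pi * (j : ℝ) * t)
        ≤ (2 * Real.pi * (j : ℝ) * t) ^ 2 / 2 := one_sub_cos_le_half_sq _
      _ ≤ (2 * Real.pi * (m : ℝ)) ^ 2 / 2 * t ^ 2 := by
          have hpi := Real.pi_pos
          have : (2 * Real.pi * (j : ℝ) * t) ^ 2 ≤ (2 * Real.pi * (m : ℝ)) ^ 2 * t ^ 2 := by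
            have hsq : (j : ℝ) ^ 2 ≤ (m : ℝ) ^ 2 := by
              rw [← sq_abs ((j : ℝ))]
              exact pow_le_pow_left₀ (abs_nonneg _) hjabs 2
            have e1 : (2 * Real.pi * (j : ℝ) * t) ^ 2
                = (2 * Real.pi) ^ 2 * t ^ 2 * (j : ℝ) ^ 2 := by ring
            have e2 : (2 * Real.pi * (m : ℝ)) ^ 2 * t ^ 2
                = (2 * Real.pi) ^ 2 * t ^ 2 * (m : ℝ) ^ 2 := by ring
            rw [e1, e2]
            exact mul_le_mul_of_nonneg_left hsq (by positivity)
          linarith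
  calc (2 * (m : ℝ) + 1)⁻¹ *
      |∑ j ∈ Finset.Icc (-(m : ℤ)) (m : ℤ), (Real.cos (2 * Real.pi * (j : ℝ) * t) - 1)|
      ≤ (2 * (m : ℝ) + 1)⁻¹ *
        ∑ j ∈ Finset.Icc (-(m : ℤ)) (m : ℤ), |Real.cos (2 * Real.pi * (j : ℝ) * t) - 1| := by
        apply mul_le_mul_of_nonneg_left (Finset.abs_sum_le_sum_abs _ _)
        positivity
    _ ≤ (2 * (m : ℝ) + 1)⁻¹ *
        ∑ _j ∈ Finset.Icc (-(m : ℤ)) (m : ℤ), (2 * Real.pi * (m : ℝ)) ^ 2 / 2 * t ^ 2 := by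
        apply mul_le_mul_of_nonneg_left (Finset.sum_le_sum hterm)
        positivity
    _ = (2 * Real.pi * (m : ℝ)) ^ 2 / 2 * t ^ 2 := by
        rw [Finset.sum_const, card_Icc_int, nsmul_eq_mul, hcard, ← mul_assoc,
          inv_mul_cancel₀ (twoMone_pos m).ne', one_mul]

/-- Bounded geometric-type sum: the key estimate for `t ∉ ℤ`. -/
lemma Dm_tendsto_zero {t : ℝ} (ht : ∀ z : ℤ, t ≠ (z : ℝ)) :
    Filter.Tendsto (fun m : ℕ => Dm m t) Filter.atTop (nhds 0) := by
  set z : ℂ := Complex.exp ((2 * Real.pi * t : ℝ) * Complex.I) with hz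
  have hz0 : z ≠ 0 := Complex.exp_ne_zero _
  have hz1 : z ≠ 1 := by
    intro h
    rw [hz, Complex.exp_eq_one_iff] at h
    obtain ⟨k, hk⟩ := h
    have hI : ((2 * Real.pi * t : ℝ) : ℂ) * Complex.I
        = (((k : ℝ) * (2 * Real.pi) : ℝ) : ℂ) * Complex.I := by
      rw [hk]; push_cast; ring
    have h2 : ((2 * Real.pi * t : ℝ) : ℂ) = (((k : ℝ) * (2 * Real.pi) : ℝ) : ℂ) :=
      mul_right_cancel₀ Complex.I_ne_zero hI
    have h3 : 2 * Real.pi * t = (k : ℝ) * (2 * Real.pi) := by exact_mod_cast h2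
    apply ht k
    have h4 : (2 * Real.pi) * t = (2 * Real.pi) * (k : ℝ) := by linarith
    exact mul_left_cancel₀ (by positivity) h4
  have habs : ‖z‖ = 1 := Complex.norm_exp_ofReal_mul_I _
  have hzpow : ∀ k : ℤ, ‖z ^ k‖ = 1 := by
    intro k; rw [norm_zpow, habs, one_zpow]
  -- telescoping identity
  have key : ∀ m : ℕ, (z - 1) * (∑ j ∈ Finset.Icc (-(m : ℤ)) (m : ℤ), z ^ j)
      = z ^ ((m : ℤ) + 1) - z ^ (-(m : ℤ)) := by
    have step : ∀ k : ℤ, (z - 1) * z ^ k = z ^ (k + 1) - z ^ k := by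
      intro k
      rw [sub_mul, one_mul, zpow_add_one₀ hz0, mul_comm]
    intro m
    induction m with
    | zero => simpa using step 0
    | succ m ih =>
      have hins : Finset.Icc (-((m : ℤ) + 1)) ((m : ℤ) + 1)
          = insert (-((m : ℤ) + 1)) (insert ((m : ℤ) + 1) (Finset.Icc (-(m : ℤ)) (m : ℤ))) := by
        ext x; simp only [Finset.mem_Icc, Finset.mem_insert]; omega
      have h1 : (-((m : ℤ) + 1)) ∉ insert ((m : ℤ) + 1) (Finset.Icc (-(m : ℤ)) (m : ℤ)) := by
        simp only [Finset.mem_insert, Finset.mem_Icc]; omega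
      have h2 : ((m : ℤ) + 1) ∉ Finset.Icc (-(m : ℤ)) (m : ℤ) := by
        simp only [Finset.mem_Icc]; omega
      have hc : ((m + 1 : ℕ) : ℤ) = (m : ℤ) + 1 := by push_cast; ring
      rw [hc, hins, Finset.sum_insert h1, Finset.sum_insert h2, mul_add, mul_add, ih,
        step, step]
      have e1 : (-((m : ℤ) + 1) + 1) = -(m : ℤ) := by ring
      rw [e1]; ring
  -- the bound
  have hb : ∀ m : ℕ, |Dm m t| ≤ (2 * (m : ℝ) + 1)⁻¹ * (2 / ‖z - 1‖) := by
    intro m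
    have hzsub : ‖z - 1‖ ≠ 0 := by
      simp only [ne_eq, norm_eq_zero, sub_eq_zero]; exact hz1
    have hzsubpos : 0 < ‖z - 1‖ := lt_of_le_of_ne (norm_nonneg _) (Ne.symm hzsub)
    -- |sum z^j| ≤ 2 / |z-1|
    have hsum : ‖∑ j ∈ Finset.Icc (-(m : ℤ)) (m : ℤ), z ^ j‖
        ≤ 2 / ‖z - 1‖ := by
      have := key m
      have h3 : ‖z - 1‖ * ‖∑ j ∈ Finset.Icc (-(m : ℤ)) (m : ℤ), z ^ j‖
          = ‖z ^ ((m : ℤ) + 1) - z ^ (-(m : ℤ))‖ := by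
        rw [← norm_mul, this]
      have h4 : ‖z ^ ((m : ℤ) + 1) - z ^ (-(m : ℤ))‖ ≤ 2 := by
        calc ‖z ^ ((m : ℤ) + 1) - z ^ (-(m : ℤ))‖
            ≤ ‖z ^ ((m : ℤ) + 1)‖ + ‖z ^ (-(m : ℤ))‖ :=
              norm_sub_le _ _
          _ = 2 := by rw [hzpow, hzpow]; norm_num
      rw [le_div_iff₀ hzsubpos, mul_comm]
      rw [h3]; exact h4
    -- cos sum = re of z-power sum
    have hre : ∑ j ∈ Finset.Icc (-(m : ℤ)) (m : ℤ), Real.cos (2 * Real.pi * (j : ℝ) * t)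
        = (∑ j ∈ Finset.Icc (-(m : ℤ)) (m : ℤ), z ^ j).re := by
      rw [Complex.re_sum]
      apply Finset.sum_congr rfl
      intro j _
      have e : z ^ j = Complex.exp (((2 * Real.pi * (j : ℝ) * t : ℝ)) * Complex.I) := by
        rw [hz, ← Complex.exp_int_mul]
        congr 1
        push_cast; ring
      rw [e, Complex.exp_ofReal_mul_I_re]
    unfold Dm
    rw [abs_mul, abs_inv, abs_of_pos (twoMone_pos m), hre]
    apply mul_le_mul_of_nonneg_left _ (by positivity)
    exact le_trans (Complex.abs_re_le_norm _) hsum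
  -- squeeze
  apply squeeze_zero_norm hb
  have h1 : Filter.Tendsto (fun m : ℕ => (2 * (m : ℝ) + 1)) Filter.atTop Filter.atTop := by
    apply Filter.tendsto_atTop_add_const_right
    exact (tendsto_natCast_atTop_atTop).const_mul_atTop (by norm_num : (0:ℝ) < 2)
  have h2 : Filter.Tendsto (fun m : ℕ => (2 * (m : ℝ) + 1)⁻¹) Filter.atTop (nhds 0) :=
    h1.inv_tendsto_atTop
  have := h2.mul_const (2 / ‖z - 1‖)
  rw [zero_mul] at this
  exact this

/-! ### Multipliability from summability of `|f - 1|` -/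

lemma multipliable_of_abs_sub_one {ι : Type*} {f : ι → ℝ}
    (h : Summable fun i => |f i - 1|) : Multipliable f := by
  set s : Set ι := {i | (1:ℝ)/2 ≤ |f i - 1|} with hs
  have hev : ∀ᶠ i in Filter.cofinite, |f i - 1| < 1/2 :=
    h.tendsto_cofinite_zero.eventually_lt_const (by norm_num)
  have hsfin : s.Finite := by
    have := Filter.eventually_cofinite.mp hev
    apply this.subset
    intro i hi
    simp only [Set.mem_setOf_eq] at hi ⊢
    exact not_lt.mpr hi
  have h1 : Multipliable (f ∘ (↑) : s → ℝ) := by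
    haveI := hsfin.fintype
    exact (hasProd_fintype _).multipliable
  have h2 : Multipliable (f ∘ (↑) : ↥sᶜ → ℝ) := by
    have hlt : ∀ i : ↥sᶜ, |f (i : ι) - 1| < 1/2 := by
      intro i
      have := i.2
      simp only [hs, Set.mem_compl_iff, Set.mem_setOf_eq, not_le] at this
      exact this
    have hpos : ∀ i : ↥sᶜ, 0 < f (i : ι) := by
      intro i
      have := abs_lt.mp (hlt i)
      linarith [this.1]
    have hfi : ∀ i : ↥sᶜ, (1:ℝ)/2 ≤ f (i : ι) := by
      intro i
      have := abs_lt.mp (hlt i)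
      linarith [this.1]
    have hlog : Summable fun i : ↥sᶜ => Real.log (f (i : ι)) := by
      apply Summable.of_norm_bounded (g := fun i : ↥sᶜ => 2 * |f (i : ι) - 1|)
        ((h.subtype sᶜ).mul_left 2)
      intro i
      have hub : Real.log (f (i : ι)) ≤ |f (i : ι) - 1| :=
        (Real.log_le_sub_one_of_pos (hpos i)).trans (le_abs_self _)
      have hinv : Real.log (f (i : ι))⁻¹ ≤ (f (i : ι))⁻¹ - 1 :=
        Real.log_le_sub_one_of_pos (inv_pos.mpr (hpos i))
      rw [Real.log_inv] at hinv
      have hmulinv : f (i : ι) * (f (i : ι))⁻¹ = 1 := mul_inv_cancel₀ (hpos i).ne'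
      have habs1 : 1 - f (i : ι) ≤ |f (i : ι) - 1| := by
        rw [abs_sub_comm]; exact le_abs_self _
      have hlb : -(2 * |f (i : ι) - 1|) ≤ Real.log (f (i : ι)) := by
        have hgoal : (f (i : ι))⁻¹ - 1 ≤ 2 * |f (i : ι) - 1| := by
          nlinarith [hfi i, hpos i, abs_nonneg (f (i : ι) - 1), hmulinv]
        linarith
      rw [Real.norm_eq_abs]
      rw [abs_le]
      constructor
      · exact hlb
      · exact hub.trans (by linarith [abs_nonneg (f (i : ι) - 1)])
    refine ⟨Real.exp (∑' i : ↥sᶜ, Real.log (f (i : ι))), ?_⟩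
    have hsumtend := hlog.hasSum
    have htend : Filter.Tendsto
        (fun fs : Finset ↥sᶜ => Real.exp (∑ i ∈ fs, Real.log (f (i : ι))))
        Filter.atTop (nhds (Real.exp (∑' i : ↥sᶜ, Real.log (f (i : ι))))) :=
      (Real.continuous_exp.continuousAt.tendsto.comp hsumtend)
    unfold HasProd
    apply htend.congr
    intro fs
    rw [Real.exp_sum]
    exact Finset.prod_congr rfl fun i _ => Real.exp_log (hpos i)
  exact h1.mul_compl h2

/-! ### Convolution algebra -/

variable {G : Type*} [Group G]

lemma fconvReal_zero_left (u : G → ℝ) : fconvReal 0 u = 0 := by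
  funext g; simp [fconvReal]

lemma fconvReal_add_left (a b : G →₀ ℝ) (u : G → ℝ) :
    fconvReal (a + b) u = fconvReal a u + fconvReal b u := by
  funext g
  exact Finsupp.sum_add_index' (fun h => zero_mul _) (fun h c d => add_mul c d _)

lemma fconvReal_single (h : G) (c : ℝ) (u : G → ℝ) :
    fconvReal (Finsupp.single h c) u = fun g => c * u (h⁻¹ * g) := by
  funext g; exact Finsupp.sum_single_index (zero_mul _)

lemma fconvReal_zero_right (a : G →₀ ℝ) : fconvReal a 0 = 0 := by
  funext g; simp [fconvReal]

lemma fconvReal_add_right (a : G →₀ ℝ) (u v : G → ℝ) :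
    fconvReal a (u + v) = fconvReal a u + fconvReal a v := by
  funext g
  simp only [fconvReal, Pi.add_apply, mul_add]
  exact Finsupp.sum_add

lemma fconvReal_sum_right (a : G →₀ ℝ) {ι : Type*} (s : Finset ι) (u : ι → G → ℝ) :
    fconvReal a (∑ i ∈ s, u i) = ∑ i ∈ s, fconvReal a (u i) := by
  induction s using Finset.cons_induction with
  | empty => simpa using fconvReal_zero_right a
  | cons i s hi ih =>
    rw [Finset.sum_cons, Finset.sum_cons, fconvReal_add_right, ih]

lemma fconvReal_sum_left {ι : Type*} (s : Finset ι) (a : ι → G →₀ ℝ) (u : G → ℝ) :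
    fconvReal (∑ i ∈ s, a i) u = ∑ i ∈ s, fconvReal (a i) u := by
  induction s using Finset.cons_induction with
  | empty => simpa using fconvReal_zero_left u
  | cons i s hi ih =>
    rw [Finset.sum_cons, Finset.sum_cons, fconvReal_add_left, ih]

lemma fconvRealR_zero_right (u : G → ℝ) : fconvRealR u 0 = 0 := by
  funext g; simp [fconvRealR]

lemma fconvRealR_add_right (u : G → ℝ) (a b : G →₀ ℝ) :
    fconvRealR u (a + b) = fconvRealR u a + fconvRealR u b := by
  funext g
  exact Finsupp.sum_add_index' (fun h => mul_zero _) (fun h c d => mul_add _ c d)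

lemma fconvRealR_single_right (u : G → ℝ) (h' : G) (c' : ℝ) :
    fconvRealR u (Finsupp.single h' c') = fun g => u (g * h'⁻¹) * c' := by
  funext g; exact Finsupp.sum_single_index (mul_zero _)

lemma fconvRealR_zero_left (b : G →₀ ℝ) : fconvRealR 0 b = 0 := by
  funext g; simp [fconvRealR]

lemma fconvRealR_add_left (u v : G → ℝ) (b : G →₀ ℝ) :
    fconvRealR (u + v) b = fconvRealR u b + fconvRealR v b := by
  funext g
  simp only [fconvRealR, Pi.add_apply, add_mul]
  exact Finsupp.sum_add

lemma fconvRealR_sum_left {ι : Type*} (s : Finset ι) (u : ι → G → ℝ) (b : G →₀ ℝ) :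
    fconvRealR (∑ i ∈ s, u i) b = ∑ i ∈ s, fconvRealR (u i) b := by
  induction s using Finset.cons_induction with
  | empty => simpa using fconvRealR_zero_left b
  | cons i s hi ih =>
    rw [Finset.sum_cons, Finset.sum_cons, fconvRealR_add_left, ih]

/-- Induction principle for `MonoidAlgebra` with the correct instances. -/
lemma malg_induction {p : MonoidAlgebra ℤ G → Prop} (a : MonoidAlgebra ℤ G)
    (h0 : p 0) (hadd : ∀ f g : MonoidAlgebra ℤ G, p f → p g → p (f + g))
    (hsingle : ∀ (h : G) (c : ℤ), p (MonoidAlgebra.single h c)) : p a :=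
  MonoidAlgebra.induction_linear a h0 hadd hsingle

lemma castZR_zero : castZR (0 : MonoidAlgebra ℤ G) = 0 := by
  simp [castZR]

lemma castZR_apply (a : MonoidAlgebra ℤ G) (g : G) : castZR a g = ((a.coeff g : ℤ) : ℝ) := rfl

lemma castZR_add (a b : MonoidAlgebra ℤ G) : castZR (a + b) = castZR a + castZR b := by
  ext g
  have h1 : (a + b).coeff g = a.coeff g + b.coeff g := rfl
  rw [castZR_apply, h1, Finsupp.add_apply, castZR_apply, castZR_apply, Int.cast_add]

lemma castZR_single (h : G) (c : ℤ) :
    castZR (MonoidAlgebra.single h c : MonoidAlgebra ℤ G) = Finsupp.single h ((c : ℤ) : ℝ) := by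
  ext g
  rw [castZR_apply, MonoidAlgebra.coeff_single, Finsupp.single_apply, Finsupp.single_apply]
  split_ifs <;> simp

lemma castZR_sum {ι : Type*} (s : Finset ι) (x : ι → MonoidAlgebra ℤ G) :
    castZR (∑ i ∈ s, x i) = ∑ i ∈ s, castZR (x i) := by
  induction s using Finset.cons_induction with
  | empty => simpa using castZR_zero
  | cons i s hi ih =>
    rw [Finset.sum_cons, Finset.sum_cons, castZR_add, ih]

lemma castZR_injective : Function.Injective (castZR (G := G)) :=
  fun _ _ hab => MonoidAlgebra.coeff_injective (Finsupp.mapRange_injective _ Int.cast_zero Int.cast_injective hab)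

/-- Associativity: `(ab) * u = a * (b * u)`. -/
lemma fconvReal_mul (a b : MonoidAlgebra ℤ G) (u : G → ℝ) :
    fconvReal (castZR (a * b)) u = fconvReal (castZR a) (fconvReal (castZR b) u) := by
  induction a using malg_induction with
  | h0 => simp only [zero_mul, castZR_zero, fconvReal_zero_left]
  | hadd p q hp hq =>
    simp only [add_mul, castZR_add, fconvReal_add_left, hp, hq]
  | hsingle h c =>
    induction b using malg_induction with
    | h0 =>
      simp only [mul_zero, castZR_zero, fconvReal_zero_left, fconvReal_zero_right]
    | hadd p q hp hq =>
      simp only [mul_add, castZR_add, fconvReal_add_left, fconvReal_add_right, hp, hq]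
    | hsingle h' c' =>
      rw [MonoidAlgebra.single_mul_single]
      simp only [castZR_single, fconvReal_single]
      funext g
      have e : (h * h')⁻¹ * g = h'⁻¹ * (h⁻¹ * g) := by
        rw [mul_inv_rev, mul_assoc]
      rw [e]; push_cast; ring

/-- Associativity: `(a * u) * b = a * (u * b)`. -/
lemma fconvRealR_fconvReal (a : MonoidAlgebra ℤ G) (u : G → ℝ) (b : MonoidAlgebra ℤ G) :
    fconvRealR (fconvReal (castZR a) u) (castZR b) = fconvReal (castZR a) (fconvRealR u (castZR b)) := by
  induction a using malg_induction with
  | h0 =>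
    simp only [castZR_zero, fconvReal_zero_left, fconvRealR_zero_left]
  | hadd p q hp hq =>
    simp only [castZR_add, fconvReal_add_left, fconvRealR_add_left, hp, hq]
  | hsingle h c =>
    induction b using malg_induction with
    | h0 =>
      simp only [castZR_zero, fconvRealR_zero_right, fconvReal_zero_right]
    | hadd p q hp hq =>
      simp only [castZR_add, fconvRealR_add_right, fconvReal_add_right, hp, hq]
    | hsingle h' c' =>
      simp only [castZR_single, fconvReal_single, fconvRealR_single_right]
      funext g
      have e : h⁻¹ * (g * h'⁻¹) = (h⁻¹ * g) * h'⁻¹ := by rw [mul_assoc]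
      rw [e]; ring

/-- Right convolution of casts corresponds to multiplication in the group algebra. -/
lemma fconvRealR_cast_mul (a b : MonoidAlgebra ℤ G) :
    fconvRealR (⇑(castZR a)) (castZR b) = ⇑(castZR (a * b)) := by
  induction a using malg_induction with
  | h0 =>
    simp only [zero_mul, castZR_zero, Finsupp.coe_zero]
    simpa using fconvRealR_zero_left (castZR b)
  | hadd p q hp hq =>
    simp only [add_mul, castZR_add, Finsupp.coe_add, fconvRealR_add_left, hp, hq]
  | hsingle h c =>
    induction b using malg_induction with
    | h0 =>
      simp only [mul_zero, castZR_zero, Finsupp.coe_zero]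
      simpa using fconvRealR_zero_right (⇑(castZR (MonoidAlgebra.single h c : MonoidAlgebra ℤ G)))
    | hadd p q hp hq =>
      simp only [mul_add, castZR_add, Finsupp.coe_add, fconvRealR_add_right, hp, hq]
    | hsingle h' c' =>
      rw [MonoidAlgebra.single_mul_single]
      simp only [castZR_single, fconvRealR_single_right]
      funext g
      rw [Finsupp.single_apply, Finsupp.single_apply]
      by_cases hcond : h * h' = g
      · rw [if_pos hcond, if_pos (eq_mul_inv_iff_mul_eq.mpr hcond)]
        push_cast; ring
      · rw [if_neg hcond, if_neg (fun hh => hcond (eq_mul_inv_iff_mul_eq.mp hh)), zero_mul]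

/-- Convolution with the delta function at `1` gives back the function. -/
lemma fconvReal_delta (a : G →₀ ℝ) :
    fconvReal a (fun g => if g = 1 then (1:ℝ) else 0) = ⇑a := by
  funext g
  show (a.sum fun h c => c * if h⁻¹ * g = 1 then (1:ℝ) else 0) = a g
  have e : ∀ h ∈ a.support, (a h * if h⁻¹ * g = 1 then (1:ℝ) else 0)
      = if h = g then a h else 0 := by
    intro h _
    by_cases hh : h = g
    · simp [hh]
    · have : ¬(h⁻¹ * g = 1) := by
        intro hcon
        exact hh (by rw [← inv_mul_eq_one]; exact hcon)
      simp [hh, this]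
  show (∑ h ∈ a.support, a h * if h⁻¹ * g = 1 then (1:ℝ) else 0) = a g
  rw [Finset.sum_congr rfl e, Finset.sum_ite_eq' a.support g (fun x => a x)]
  by_cases hg : g ∈ a.support
  · rw [if_pos hg]
  · rw [if_neg hg]
    exact (Finsupp.notMem_support_iff.mp hg).symm

lemma fconvReal_oneHat {n : ℕ} (a : G →₀ ℝ) (j l : Fin n) :
    fconvReal a (oneHatReal G n j l) = if j = l then ⇑a else 0 := by
  by_cases hjl : j = l
  · subst hjl
    rw [if_pos rfl]
    have : oneHatReal G n j j = fun g => if g = 1 then (1:ℝ) else 0 := by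
      funext g; simp [oneHatReal]
    rw [this, fconvReal_delta]
  · rw [if_neg hjl]
    have : oneHatReal G n j l = 0 := by
      funext g; simp [oneHatReal, hjl]
    rw [this, fconvReal_zero_right]

/-! ### Memℓp facts -/

lemma memℓp_translate (h : G) {u : G → ℝ} (hu : Memℓp u 2) :
    Memℓp (fun g => u (h⁻¹ * g)) 2 := by
  have htR : (0:ℝ) < (2 : ℝ≥0∞).toReal := by norm_num
  rw [memℓp_gen_iff htR] at hu ⊢
  have : (fun g => ‖u (h⁻¹ * g)‖ ^ (2 : ℝ≥0∞).toReal)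
      = (fun g => ‖u g‖ ^ (2 : ℝ≥0∞).toReal) ∘ (Equiv.mulLeft h⁻¹) := by
    funext g; rfl
  rw [this]
  exact (Equiv.mulLeft h⁻¹).summable_iff.mpr hu

lemma memℓp_finset_sum {ι : Type*} (s : Finset ι) (v : ι → G → ℝ)
    (hv : ∀ i, Memℓp (v i) 2) : Memℓp (∑ i ∈ s, v i) 2 := by
  induction s using Finset.cons_induction with
  | empty => simpa using zero_memℓp
  | cons i s hi ih =>
    rw [Finset.sum_cons]
    exact (hv i).add ih

lemma memℓp_fconvReal (a : G →₀ ℝ) {u : G → ℝ} (hu : Memℓp u 2) :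
    Memℓp (fconvReal a u) 2 := by
  have e : fconvReal a u = ∑ h ∈ a.support, (a h) • (fun g => u (h⁻¹ * g)) := by
    funext g
    rw [Finset.sum_apply]
    simp only [Pi.smul_apply, smul_eq_mul]
    rfl
  rw [e]
  exact memℓp_finset_sum _ _ (fun h => (memℓp_translate h hu).const_smul (a h))

lemma summable_sq_of_memℓp {u : G → ℝ} (hu : Memℓp u 2) :
    Summable (fun g => (u g) ^ 2) := by
  have htR : (0:ℝ) < (2 : ℝ≥0∞).toReal := by norm_num
  rw [memℓp_gen_iff htR] at hu
  apply hu.congr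
  intro g
  have : (2 : ℝ≥0∞).toReal = ((2 : ℕ) : ℝ) := by norm_num
  rw [this, Real.rpow_natCast, Real.norm_eq_abs, sq_abs]

end DirichletAux

open DirichletAux

set_option maxHeartbeats 2000000 in
/-- Let `f ∈ M_n(ℤ[G])` with real-valued ℓ² formal inverse `ξ`, and `α ∈ ℤ[G]^{⊕n}`.
If `α ∈ r(f)(ℤ[G]^{⊕n})` then for every `m` the product
`∏_{l,g} D_m((r(ξ)α)(l)(g))` equals `1`; otherwise it tends to `0` as `m → ∞`. -/
theorem dirichlet_product_dichotomy {G : Type*} [Group G] [Countable G] {n : ℕ}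
    (f : Matrix (Fin n) (Fin n) (MonoidAlgebra ℤ G))
    (ξ : Matrix (Fin n) (Fin n) (lp (fun _ : G => ℝ) 2))
    (hξ : matConvReal (fun i j => castZR (f i j)) (fun i j => ⇑(ξ i j)) = oneHatReal G n ∧
          matConvRealR (fun i j => ⇑(ξ i j)) (fun i j => castZR (f i j)) = oneHatReal G n)
    (α : Fin n → MonoidAlgebra ℤ G) :
    ((∃ β : Fin n → MonoidAlgebra ℤ G, ∀ l, α l = ∑ k, β k * f k l) →
      ∀ m : ℕ, ∏' p : Fin n × G,
        Dm m ((∑ k, fconvReal (castZR (α k)) (⇑(ξ k p.1))) p.2) = 1) ∧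
    ((¬ ∃ β : Fin n → MonoidAlgebra ℤ G, ∀ l, α l = ∑ k, β k * f k l) →
      Filter.Tendsto (fun m : ℕ => ∏' p : Fin n × G,
          Dm m ((∑ k, fconvReal (castZR (α k)) (⇑(ξ k p.1))) p.2))
        Filter.atTop (nhds 0)) := by
  -- abbreviation
  set T : Fin n → G → ℝ := fun l => ∑ k, fconvReal (castZR (α k)) (⇑(ξ k l)) with hT
  -- entries of the inverse identities
  have hFXi : ∀ j l : Fin n,
      (∑ k, fconvReal (castZR (f j k)) (⇑(ξ k l))) = oneHatReal G n j l := by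
    intro j l
    exact congrFun (congrFun hξ.1 j) l
  have hXiF : ∀ j k : Fin n,
      (∑ l, fconvRealR (⇑(ξ j l)) (castZR (f l k))) = oneHatReal G n j k := by
    intro j k
    exact congrFun (congrFun hξ.2 j) k
  -- ℓ² membership of T l, and summability of squares
  have hmemT : ∀ l, Memℓp (T l) 2 := by
    intro l
    rw [hT]
    exact memℓp_finset_sum Finset.univ _ (fun k => memℓp_fconvReal _ (ξ k l).2)
  have hsq : ∀ l, Summable (fun g => (T l g) ^ 2) := fun l => summable_sq_of_memℓp (hmemT l)
  have hsq2 : Summable (fun p : Fin n × G => (T p.1 p.2) ^ 2) := by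
    rw [summable_prod_of_nonneg (fun p => sq_nonneg _)]
    exact ⟨fun l => hsq l, (hasSum_fintype _).summable⟩
  -- multipliability of the factors for each m
  have hmul : ∀ m : ℕ, Multipliable (fun p : Fin n × G => Dm m (T p.1 p.2)) := by
    intro m
    apply multipliable_of_abs_sub_one
    exact Summable.of_nonneg_of_le (fun p => abs_nonneg _)
      (fun p => abs_Dm_sub_one_le m (T p.1 p.2))
      (hsq2.mul_left ((2 * Real.pi * (m : ℝ)) ^ 2 / 2))
  constructor
  · -- membership case
    rintro ⟨β, hβ⟩ m
    have hTl : ∀ l, T l = ⇑(castZR (β l)) := by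
      intro l
      rw [hT]
      have step1 : ∀ k, castZR (α k) = ∑ j, castZR (β j * f j k) := by
        intro k; rw [hβ k, castZR_sum]
      calc (∑ k, fconvReal (castZR (α k)) (⇑(ξ k l)))
          = ∑ k, ∑ j, fconvReal (castZR (β j * f j k)) (⇑(ξ k l)) := by
            apply Finset.sum_congr rfl
            intro k _
            rw [step1 k, fconvReal_sum_left]
        _ = ∑ j, ∑ k, fconvReal (castZR (β j)) (fconvReal (castZR (f j k)) (⇑(ξ k l))) := by
            rw [Finset.sum_comm]
            apply Finset.sum_congr rfl
            intro j _
            exact Finset.sum_congr rfl fun k _ => fconvReal_mul _ _ _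
        _ = ∑ j, fconvReal (castZR (β j)) (∑ k, fconvReal (castZR (f j k)) (⇑(ξ k l))) := by
            apply Finset.sum_congr rfl
            intro j _
            rw [fconvReal_sum_right]
        _ = ∑ j, fconvReal (castZR (β j)) (oneHatReal G n j l) := by
            apply Finset.sum_congr rfl
            intro j _
            rw [hFXi j l]
        _ = ⇑(castZR (β l)) := by
            have : ∀ j, fconvReal (castZR (β j)) (oneHatReal G n j l)
                = if j = l then ⇑(castZR (β j)) else 0 := fun j => fconvReal_oneHat _ j l
            rw [Finset.sum_congr rfl fun j _ => this j]
            rw [Finset.sum_ite_eq' Finset.univ l (fun j => ⇑(castZR (β j)))]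
            rw [if_pos (Finset.mem_univ l)]
    have hval : ∀ p : Fin n × G, Dm m (T p.1 p.2) = 1 := by
      intro p
      rw [hTl p.1]
      rw [castZR_apply]
      exact Dm_int m ((β p.1).coeff p.2)
    calc (∏' p : Fin n × G, Dm m (T p.1 p.2)) = ∏' _p : Fin n × G, (1:ℝ) :=
          tprod_congr hval
      _ = 1 := tprod_one
  · -- non-membership case
    intro hnot
    -- there is a non-integer value
    have hexists : ∃ p₀ : Fin n × G, ∀ z : ℤ, T p₀.1 p₀.2 ≠ (z : ℝ) := by
      by_contra hc
      push_neg at hc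
      apply hnot
      -- all values are integers; build β
      have hint : ∀ p : Fin n × G, ∃ z : ℤ, T p.1 p.2 = (z : ℝ) := hc
      set Tz : Fin n → G → ℤ := fun l g => Classical.choose (hint (l, g)) with hTz
      have hTzval : ∀ l g, T l g = ((Tz l g : ℤ) : ℝ) := fun l g =>
        Classical.choose_spec (hint (l, g))
      have hfin : ∀ l, (Function.support (Tz l)).Finite := by
        intro l
        have hev : ∀ᶠ g in Filter.cofinite, (T l g) ^ 2 < 1 :=
          (hsq l).tendsto_cofinite_zero.eventually_lt_const (by norm_num)
        apply (Filter.eventually_cofinite.mp hev).subset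
        intro g hg
        simp only [Function.mem_support] at hg
        simp only [Set.mem_setOf_eq, not_lt]
        have hz : (1:ℤ) ≤ |Tz l g| := by
          rcases lt_or_ge 0 (Tz l g) with h | h
          · calc (1:ℤ) ≤ Tz l g := h
              _ ≤ |Tz l g| := le_abs_self _
          · have : Tz l g < 0 := lt_of_le_of_ne h hg
            calc (1:ℤ) ≤ -(Tz l g) := by omega
              _ ≤ |Tz l g| := neg_le_abs _
        have : (1:ℝ) ≤ |((Tz l g : ℤ) : ℝ)| := by
          rw [← Int.cast_abs]
          exact_mod_cast hz
        calc (1:ℝ) ≤ |((Tz l g : ℤ) : ℝ)| ^ 2 := by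
              nlinarith [abs_nonneg ((Tz l g : ℤ) : ℝ)]
          _ = (T l g) ^ 2 := by rw [sq_abs, ← hTzval]
      set β : Fin n → MonoidAlgebra ℤ G := fun l => MonoidAlgebra.ofCoeff (Finsupp.ofSupportFinite (Tz l) (hfin l))
        with hβdef
      have hβcoe : ∀ l, ⇑(castZR (β l)) = T l := by
        intro l
        funext g
        rw [castZR_apply]
        have : (β l).coeff g = Tz l g := congrFun (Finsupp.ofSupportFinite_coe) g
        rw [this, ← hTzval]
      refine ⟨β, ?_⟩
      intro k
      apply castZR_injective
      apply DFunLike.coe_injective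
      show ⇑(castZR (α k)) = ⇑(castZR (∑ l, β l * f l k))
      rw [castZR_sum, Finsupp.coe_finset_sum]
      calc ⇑(castZR (α k))
          = ∑ j, fconvReal (castZR (α j)) (oneHatReal G n j k) := by
            have : ∀ j, fconvReal (castZR (α j)) (oneHatReal G n j k)
                = if j = k then ⇑(castZR (α j)) else 0 := fun j => fconvReal_oneHat _ j k
            rw [Finset.sum_congr rfl fun j _ => this j]
            rw [Finset.sum_ite_eq' Finset.univ k (fun j => ⇑(castZR (α j)))]
            rw [if_pos (Finset.mem_univ k)]
        _ = ∑ j, fconvReal (castZR (α j)) (∑ l, fconvRealR (⇑(ξ j l)) (castZR (f l k))) := by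
            apply Finset.sum_congr rfl
            intro j _
            rw [hXiF j k]
        _ = ∑ j, ∑ l, fconvReal (castZR (α j)) (fconvRealR (⇑(ξ j l)) (castZR (f l k))) := by
            apply Finset.sum_congr rfl
            intro j _
            rw [fconvReal_sum_right]
        _ = ∑ l, ∑ j, fconvRealR (fconvReal (castZR (α j)) (⇑(ξ j l))) (castZR (f l k)) := by
            rw [Finset.sum_comm]
            apply Finset.sum_congr rfl
            intro l _
            exact Finset.sum_congr rfl fun j _ => (fconvRealR_fconvReal _ _ _).symm
        _ = ∑ l, fconvRealR (T l) (castZR (f l k)) := by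
            apply Finset.sum_congr rfl
            intro l _
            rw [hT, ← fconvRealR_sum_left]
        _ = ∑ l, ⇑(castZR (β l * f l k)) := by
            apply Finset.sum_congr rfl
            intro l _
            rw [← hβcoe l, fconvRealR_cast_mul]
    obtain ⟨p₀, hp₀⟩ := hexists
    -- bound |tprod| ≤ |Dm m t₀|
    have hbound : ∀ m : ℕ,
        ‖∏' p : Fin n × G, Dm m (T p.1 p.2)‖ ≤ |Dm m (T p₀.1 p₀.2)| := by
      intro m
      have hprod := (hmul m).hasProd
      have htend : Filter.Tendsto
          (fun s : Finset (Fin n × G) => |∏ p ∈ s, Dm m (T p.1 p.2)|)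
          Filter.atTop (nhds |∏' p : Fin n × G, Dm m (T p.1 p.2)|) :=
        (continuous_abs.continuousAt.tendsto.comp hprod)
      rw [Real.norm_eq_abs]
      apply le_of_tendsto htend
      filter_upwards [Filter.eventually_ge_atTop ({p₀} : Finset (Fin n × G))] with s hs
      have hp₀mem : p₀ ∈ s := hs (Finset.mem_singleton_self p₀)
      rw [Finset.abs_prod, ← Finset.mul_prod_erase s _ hp₀mem]
      apply mul_le_of_le_one_right (abs_nonneg _)
      exact Finset.prod_le_one (fun p _ => abs_nonneg _) (fun p _ => abs_Dm_le_one m _)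
    apply squeeze_zero_norm hbound
    have := (Dm_tendsto_zero hp₀).abs
    rwa [abs_zero] at this

end
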